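/- Let j₁ < j₂ be real numbers, set L = j₂ − j₁, and let f : ℝ → ℝ be continuously differentiable and nonnegative on [j₁, j₂] with f(j₁) = f(j₂) = ε. Let α > 0 and 0 < β < π², and suppose ∫_{j₁}^{j₂} f(x)² dx = α and ∫_{j₁}^{j₂} f'(x)² dx ≤ αβ/L². Then ε ≥ (√α / (2√L)) · (1 − β/π²). -/

import Mathlib

open MeasureTheory Set Real intervalIntegral

/-- Truncated Wirtinger step. -/
lemma wirtinger_truncated (a b : ℝ) (hab : a < b) (g g' : ℝ → ℝ)
    (hderiv : ∀ x ∈ Set.Icc a b, HasDerivAt g (g' x) x)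
    (hg'cont : ContinuousOn g' (Set.Icc a b))
    (δ : ℝ) (hδ0 : 0 < δ) (hδ : δ < (b - a) / 2) :
    (π/(b-a))^2 * (∫ x in (a+δ)..(b-δ), g x ^ 2) +
      (π/(b-a)) * (g (b-δ)^2 * (Real.cos ((π/(b-a))*(b-δ-a)) / Real.sin ((π/(b-a))*(b-δ-a)))
        - g (a+δ)^2 * (Real.cos ((π/(b-a))*(a+δ-a)) / Real.sin ((π/(b-a))*(a+δ-a))))
      ≤ ∫ x in (a+δ)..(b-δ), g' x ^ 2 := by
  set L := b - a with hLdef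
  have hL : 0 < L := by simp [hLdef]; linarith
  set k := π / L with hkdef
  have hk : 0 < k := div_pos Real.pi_pos hL
  set c : ℝ → ℝ := fun x => Real.cos (k*(x-a)) / Real.sin (k*(x-a)) with hcdef
  set a' := a + δ with ha'def
  set b' := b - δ with hb'def
  have ha'b' : a' ≤ b' := by simp only [ha'def, hb'def]; linarith
  have hsub : Set.Icc a' b' ⊆ Set.Icc a b := by
    apply Set.Icc_subset_Icc <;> simp only [ha'def, hb'def] <;> linarith
  have hsin : ∀ x ∈ Set.Icc a' b', 0 < Real.sin (k*(x-a)) := by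
    intro x hx
    apply Real.sin_pos_of_pos_of_lt_pi
    · have : a < x := lt_of_lt_of_le (by simp [ha'def]; linarith) hx.1
      exact mul_pos hk (by linarith)
    · have hxb : x ≤ b' := hx.2
      have : x - a < L := by simp only [hb'def, hLdef] at *; linarith
      calc k * (x - a) < k * L := by exact mul_lt_mul_of_pos_left this hk
        _ = π := by rw [hkdef, div_mul_cancel₀ _ hL.ne']
  -- continuity of everything
  have hgc : ContinuousOn g (Set.Icc a b) := fun x hx =>
    (hderiv x hx).continuousAt.continuousWithinAt
  have hccont : ContinuousOn c (Set.Icc a' b') := by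
    apply ContinuousOn.div
    · exact (Real.continuous_cos.comp (by continuity)).continuousOn
    · exact (Real.continuous_sin.comp (by continuity)).continuousOn
    · exact fun x hx => ne_of_gt (hsin x hx)
  have hgc' : ContinuousOn g (Set.Icc a' b') := hgc.mono hsub
  have hg'c' : ContinuousOn g' (Set.Icc a' b') := hg'cont.mono hsub
  -- derivative of H = g^2 * c
  set D : ℝ → ℝ := fun x => 2*g x*g' x*c x - k*(1 + c x^2)*g x^2 with hDdef
  have hH : ∀ x ∈ Set.Icc a' b',
      HasDerivAt (fun y => g y^2 * c y) (D x) x := by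
    intro x hx
    have hs := hsin x hx
    have hsne : Real.sin (k*(x-a)) ≠ 0 := ne_of_gt hs
    have hu : HasDerivAt (fun y => k*(y-a)) k x := by
      simpa using ((hasDerivAt_id x).sub_const a).const_mul k
    have hcos : HasDerivAt (fun y => Real.cos (k*(y-a))) (-Real.sin (k*(x-a)) * k) x := hu.cos
    have hsinD : HasDerivAt (fun y => Real.sin (k*(y-a))) (Real.cos (k*(x-a)) * k) x := hu.sin
    have hcD : HasDerivAt c (-(k * (1 + c x ^2))) x := by
      have h2 := hcos.div hsinD hsne
      have h1 : 1 + c x ^ 2 = 1 / Real.sin (k*(x-a))^2 := by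
        simp only [hcdef]
        field_simp
        linear_combination Real.sin_sq_add_cos_sq (k*(x-a))
      rw [h1]
      refine h2.congr_deriv (Eq.symm ?_)
      field_simp
      linear_combination Real.sin_sq_add_cos_sq (k*(x-a))
    have hg2 : HasDerivAt (fun y => g y^2) (2*g x*g' x) x := by
      have := (hderiv x (hsub hx)).fun_pow 2
      simpa [mul_comm, mul_assoc] using this
    have := hg2.mul hcD
    refine this.congr_deriv (Eq.symm ?_)
    simp only [hDdef]
    ring
  have hDcont : ContinuousOn D (Set.Icc a' b') := by
    apply ContinuousOn.sub
    · exact ((continuousOn_const.mul hgc').mul hg'c').mul hccont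
    · exact (continuousOn_const.mul (continuousOn_const.add (hccont.pow 2))).mul (hgc'.pow 2)
  have hDint : IntervalIntegrable D volume a' b' := by
    apply ContinuousOn.intervalIntegrable
    rwa [Set.uIcc_of_le ha'b']
  have hftc : ∫ x in a'..b', D x = g b'^2 * c b' - g a'^2 * c a' := by
    exact intervalIntegral.integral_eq_sub_of_hasDerivAt (f := fun y => g y^2 * c y)
      (fun x hx => hH x (by rwa [Set.uIcc_of_le ha'b'] at hx)) hDint
  -- pointwise inequality
  have hpt : ∀ x ∈ Set.Icc a' b', k^2 * g x^2 + k * D x ≤ g' x ^2 := by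
    intro x hx
    simp only [hDdef]
    nlinarith [sq_nonneg (g' x - k * g x * c x), sq_nonneg (g x), hk]
  -- integrate
  have hint1 : IntervalIntegrable (fun x => k^2 * g x^2 + k * D x) volume a' b' := by
    apply ContinuousOn.intervalIntegrable
    rw [Set.uIcc_of_le ha'b']
    exact (continuousOn_const.mul (hgc'.pow 2)).add (continuousOn_const.mul hDcont)
  have hint2 : IntervalIntegrable (fun x => g' x ^ 2) volume a' b' := by
    apply ContinuousOn.intervalIntegrable
    rw [Set.uIcc_of_le ha'b']
    exact hg'c'.pow 2
  have hmono := intervalIntegral.integral_mono_on ha'b' hint1 hint2 hpt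
  have hg2int : IntervalIntegrable (fun x => g x^2) volume a' b' := by
    apply ContinuousOn.intervalIntegrable
    rw [Set.uIcc_of_le ha'b']
    exact hgc'.pow 2
  rw [intervalIntegral.integral_add (hg2int.const_mul _) (hDint.const_mul _),
    intervalIntegral.integral_const_mul, intervalIntegral.integral_const_mul, hftc] at hmono
  exact hmono
open MeasureTheory Set Real intervalIntegral Filter Topology

lemma tendsto_trunc_integral (a b : ℝ) (hab : a < b) (h : ℝ → ℝ)
    (hc : ContinuousOn h (Set.Icc a b)) :
    Tendsto (fun δ => ∫ x in (a+δ)..(b-δ), h x) (𝓝[>] (0:ℝ))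
      (𝓝 (∫ x in a..b, h x)) := by
  set Φ : ℝ → ℝ := fun y => ∫ x in a..y, h x with hΦdef
  have hc' : ContinuousOn h (Set.uIcc a b) := by rwa [Set.uIcc_of_le hab.le]
  have hint : IntervalIntegrable h volume a b := hc'.intervalIntegrable
  have hΦcont : ContinuousOn Φ (Set.Icc a b) := by
    have := intervalIntegral.continuousOn_primitive_interval
      (f := h) (μ := volume) (a := a) (b := b)
      (hc'.integrableOn_compact (by rw [Set.uIcc_of_le hab.le]; exact isCompact_Icc))
    rwa [Set.uIcc_of_le hab.le] at this
  have hev : ∀ᶠ δ in 𝓝[>] (0:ℝ),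
      (∫ x in (a+δ)..(b-δ), h x) = Φ (b-δ) - Φ (a+δ) := by
    filter_upwards [Ioo_mem_nhdsGT_of_mem (Set.left_mem_Ico.2 (by linarith : (0:ℝ) < (b-a)/2))]
      with δ hδ
    have h1 : IntervalIntegrable h volume a (b-δ) :=
      hint.mono_set (by rw [Set.uIcc_of_le (by linarith [hδ.1, hδ.2] : a ≤ b - δ),
        Set.uIcc_of_le hab.le]; exact Set.Icc_subset_Icc le_rfl (by linarith [hδ.1]))
    have h2 : IntervalIntegrable h volume a (a+δ) :=
      hint.mono_set (by rw [Set.uIcc_of_le (by linarith [hδ.1] : a ≤ a + δ),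
        Set.uIcc_of_le hab.le]; exact Set.Icc_subset_Icc le_rfl (by linarith [hδ.2]))
    rw [hΦdef]
    exact (intervalIntegral.integral_interval_sub_left h1 h2).symm
  rw [tendsto_congr' hev]
  have hΦa : Tendsto (fun δ => Φ (a+δ)) (𝓝[>] (0:ℝ)) (𝓝 (Φ a)) := by
    apply (hΦcont.continuousWithinAt (Set.left_mem_Icc.2 hab.le)).tendsto.comp
    rw [tendsto_nhdsWithin_iff]
    constructor
    · simpa using ((continuous_const.fun_add continuous_id).tendsto (0:ℝ)).mono_left
        (nhdsWithin_le_nhds : 𝓝[>] (0:ℝ) ≤ 𝓝 0)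
    · filter_upwards [Ioo_mem_nhdsGT_of_mem (Set.left_mem_Ico.2 (by linarith : (0:ℝ) < b-a))]
        with δ hδ
      exact ⟨by linarith [hδ.1], by linarith [hδ.2]⟩
  have hΦb : Tendsto (fun δ => Φ (b-δ)) (𝓝[>] (0:ℝ)) (𝓝 (Φ b)) := by
    apply (hΦcont.continuousWithinAt (Set.right_mem_Icc.2 hab.le)).tendsto.comp
    rw [tendsto_nhdsWithin_iff]
    constructor
    · simpa using ((continuous_const.fun_sub continuous_id).tendsto (0:ℝ)).mono_left
        (nhdsWithin_le_nhds : 𝓝[>] (0:ℝ) ≤ 𝓝 0)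
    · filter_upwards [Ioo_mem_nhdsGT_of_mem (Set.left_mem_Ico.2 (by linarith : (0:ℝ) < b-a))]
        with δ hδ
      exact ⟨by linarith [hδ.2], by linarith [hδ.1]⟩
  have : Φ a = 0 := by simp [hΦdef]
  have hgoal := hΦb.sub hΦa
  rw [this, sub_zero] at hgoal
  exact hgoal
open MeasureTheory Set Real intervalIntegral Filter Topology

lemma tendsto_slope_right (g : ℝ → ℝ) (a d : ℝ) (hd : HasDerivAt g d a) (hga : g a = 0) :
    Tendsto (fun δ => g (a+δ) / δ) (𝓝[>] (0:ℝ)) (𝓝 d) := by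
  have h1 : Tendsto (slope g a) (𝓝[≠] a) (𝓝 d) := hasDerivAt_iff_tendsto_slope.1 hd
  have h2 : Tendsto (fun δ : ℝ => a + δ) (𝓝[>] (0:ℝ)) (𝓝[≠] a) := by
    rw [tendsto_nhdsWithin_iff]
    constructor
    · simpa using ((continuous_const.fun_add continuous_id).tendsto (0:ℝ)).mono_left
        (nhdsWithin_le_nhds : 𝓝[>] (0:ℝ) ≤ 𝓝 0)
    · filter_upwards [self_mem_nhdsWithin] with δ (hδ : 0 < δ)
      simp only [Set.mem_compl_iff, Set.mem_singleton_iff]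
      intro h; rw [add_eq_left] at h; linarith
  have := h1.comp h2
  refine this.congr fun δ => ?_
  simp [slope, hga, Function.comp]
  ring

lemma tendsto_div_sin (k : ℝ) (hk : 0 < k) :
    Tendsto (fun δ => δ / Real.sin (k*δ)) (𝓝[>] (0:ℝ)) (𝓝 k⁻¹) := by
  have hd : HasDerivAt (fun δ => Real.sin (k*δ)) k 0 := by
    have : HasDerivAt (fun δ : ℝ => k*δ) k 0 := by simpa using (hasDerivAt_id (0:ℝ)).const_mul k
    simpa using this.sin
  have h1 : Tendsto (slope (fun δ => Real.sin (k*δ)) 0) (𝓝[≠] (0:ℝ)) (𝓝 k) :=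
    hasDerivAt_iff_tendsto_slope.1 hd
  have h2 : Tendsto (fun δ => Real.sin (k*δ) / δ) (𝓝[>] (0:ℝ)) (𝓝 k) := by
    have := h1.mono_left (nhdsWithin_mono 0 (fun x (hx : x ∈ Set.Ioi 0) => ne_of_gt hx))
    refine this.congr fun δ => ?_
    simp [slope]; ring
  have h3 := h2.inv₀ (ne_of_gt hk)
  refine h3.congr fun δ => ?_
  rw [inv_div]

lemma tendsto_slope_left (g : ℝ → ℝ) (b d : ℝ) (hd : HasDerivAt g d b) (hgb : g b = 0) :
    Tendsto (fun δ => g (b-δ) / δ) (𝓝[>] (0:ℝ)) (𝓝 (-d)) := by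
  have h1 : Tendsto (slope g b) (𝓝[≠] b) (𝓝 d) := hasDerivAt_iff_tendsto_slope.1 hd
  have h2 : Tendsto (fun δ : ℝ => b - δ) (𝓝[>] (0:ℝ)) (𝓝[≠] b) := by
    rw [tendsto_nhdsWithin_iff]
    constructor
    · simpa using ((continuous_const.fun_sub continuous_id).tendsto (0:ℝ)).mono_left
        (nhdsWithin_le_nhds : 𝓝[>] (0:ℝ) ≤ 𝓝 0)
    · filter_upwards [self_mem_nhdsWithin] with δ (hδ : 0 < δ)
      simp only [Set.mem_compl_iff, Set.mem_singleton_iff]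
      intro h
      have : δ = 0 := by linarith [sub_eq_self.mp h]
      linarith
  have h3 := (h1.comp h2).neg
  refine h3.congr fun δ => ?_
  simp [slope, hgb, Function.comp]
  ring

lemma wirtinger (a b : ℝ) (hab : a < b) (g g' : ℝ → ℝ)
    (hderiv : ∀ x ∈ Set.Icc a b, HasDerivAt g (g' x) x)
    (hg'cont : ContinuousOn g' (Set.Icc a b))
    (hga : g a = 0) (hgb : g b = 0) :
    (π/(b-a))^2 * (∫ x in a..b, g x ^ 2) ≤ ∫ x in a..b, g' x ^ 2 := by
  set L := b - a with hLdef
  have hL : 0 < L := by simp only [hLdef]; linarith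
  set k := π / L with hkdef
  have hk : 0 < k := div_pos Real.pi_pos hL
  set l := 𝓝[>] (0:ℝ) with hldef
  have hgc : ContinuousOn g (Set.Icc a b) := fun x hx =>
    (hderiv x hx).continuousAt.continuousWithinAt
  -- limits of truncated integrals
  have T2 : Tendsto (fun δ => ∫ x in (a+δ)..(b-δ), g x ^ 2) l
      (𝓝 (∫ x in a..b, g x ^ 2)) := tendsto_trunc_integral a b hab _ (hgc.pow 2)
  have T1 : Tendsto (fun δ => ∫ x in (a+δ)..(b-δ), g' x ^ 2) l
      (𝓝 (∫ x in a..b, g' x ^ 2)) := tendsto_trunc_integral a b hab _ (hg'cont.pow 2)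
  -- cos limit
  have Tcos : Tendsto (fun δ => Real.cos (k*δ)) l (𝓝 1) := by
    have hcont : Continuous (fun δ : ℝ => Real.cos (k*δ)) :=
      Real.continuous_cos.comp (continuous_const.mul continuous_id)
    have := hcont.tendsto (0:ℝ)
    simp only [mul_zero, Real.cos_zero] at this
    exact this.mono_left (nhdsWithin_le_nhds : 𝓝[>] (0:ℝ) ≤ 𝓝 0)
  have Tdelta : Tendsto (fun δ : ℝ => δ) l (𝓝 0) :=
    tendsto_id.mono_left (nhdsWithin_le_nhds : 𝓝[>] (0:ℝ) ≤ 𝓝 0)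
  -- boundary term at a
  have Ta : Tendsto (fun δ => g (a+δ)^2 * (Real.cos (k*(a+δ-a)) / Real.sin (k*(a+δ-a)))) l
      (𝓝 0) := by
    have hmain := ((((tendsto_slope_right g a (g' a)
        (hderiv a (Set.left_mem_Icc.2 hab.le)) hga).pow 2).mul Tcos).mul
        (tendsto_div_sin k hk)).mul Tdelta
    rw [mul_zero] at hmain
    refine hmain.congr' ?_
    filter_upwards [Ioo_mem_nhdsGT_of_mem (Set.left_mem_Ico.2 (by linarith : (0:ℝ) < L/2))]
      with δ hδ
    have hδ0 : (0:ℝ) < δ := hδ.1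
    have hsinpos : 0 < Real.sin (k*δ) := by
      apply Real.sin_pos_of_pos_of_lt_pi (by positivity)
      calc k * δ < k * L := by
            apply mul_lt_mul_of_pos_left _ hk; linarith [hδ.2]
        _ = π := by rw [hkdef, div_mul_cancel₀ _ hL.ne']
    have : a + δ - a = δ := by ring
    rw [this]
    field_simp
  -- boundary term at b
  have Tb : Tendsto (fun δ => g (b-δ)^2 * (Real.cos (k*(b-δ-a)) / Real.sin (k*(b-δ-a)))) l
      (𝓝 0) := by
    have hmain := (((((tendsto_slope_left g b (g' b)
        (hderiv b (Set.right_mem_Icc.2 hab.le)) hgb).pow 2).mul Tcos).mul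
        (tendsto_div_sin k hk)).mul Tdelta).neg
    rw [mul_zero, neg_zero] at hmain
    refine hmain.congr' ?_
    filter_upwards [Ioo_mem_nhdsGT_of_mem (Set.left_mem_Ico.2 (by linarith : (0:ℝ) < L/2))]
      with δ hδ
    have hδ0 : (0:ℝ) < δ := hδ.1
    have hsinpos : 0 < Real.sin (k*δ) := by
      apply Real.sin_pos_of_pos_of_lt_pi (by positivity)
      calc k * δ < k * L := by
            apply mul_lt_mul_of_pos_left _ hk; linarith [hδ.2]
        _ = π := by rw [hkdef, div_mul_cancel₀ _ hL.ne']
    have harg : k*(b-δ-a) = π - k*δ := by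
      have : k * L = π := by rw [hkdef, div_mul_cancel₀ _ hL.ne']
      simp only [hLdef] at this
      ring_nf
      ring_nf at this
      linarith
    rw [harg, Real.sin_pi_sub, Real.cos_pi_sub]
    field_simp
  -- assemble
  have hu : Tendsto (fun δ => k^2 * (∫ x in (a+δ)..(b-δ), g x ^ 2) +
      k * (g (b-δ)^2 * (Real.cos (k*(b-δ-a)) / Real.sin (k*(b-δ-a)))
        - g (a+δ)^2 * (Real.cos (k*(a+δ-a)) / Real.sin (k*(a+δ-a))))) l
      (𝓝 (k^2 * (∫ x in a..b, g x ^ 2))) := by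
    have := (T2.const_mul (k^2)).add ((Tb.sub Ta).const_mul k)
    simpa using this
  have hev : ∀ᶠ δ in l, (fun δ => k^2 * (∫ x in (a+δ)..(b-δ), g x ^ 2) +
      k * (g (b-δ)^2 * (Real.cos (k*(b-δ-a)) / Real.sin (k*(b-δ-a)))
        - g (a+δ)^2 * (Real.cos (k*(a+δ-a)) / Real.sin (k*(a+δ-a))))) δ
      ≤ (fun δ => ∫ x in (a+δ)..(b-δ), g' x ^ 2) δ := by
    filter_upwards [Ioo_mem_nhdsGT_of_mem (Set.left_mem_Ico.2 (by linarith : (0:ℝ) < L/2))]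
      with δ hδ
    exact wirtinger_truncated a b hab g g' hderiv hg'cont δ hδ.1 hδ.2
  exact le_of_tendsto_of_tendsto hu T1 hev





open MeasureTheory Set Real

/-- The 'almost flat' case: if a nonnegative `C¹` function on `[j₁, j₂]` (of length `L`)
takes the value `ε` at both endpoints, has `L²`-mass exactly `α` and gradient energy at
most `αβ/L²` with `0 < β < π²`, then `ε ≥ (√α/(2√L)) · (1 − β/π²)`. -/
theorem almost_flat_endpoint_lower_bound
    (j₁ j₂ L ε α β : ℝ) (hj : j₁ < j₂) (hL : L = j₂ - j₁)
    (hα : 0 < α) (hβ0 : 0 < β) (hβπ : β < π ^ 2)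
    (f f' : ℝ → ℝ)
    (hderiv : ∀ x ∈ Set.Icc j₁ j₂, HasDerivAt f (f' x) x)
    (hf'cont : ContinuousOn f' (Set.Icc j₁ j₂))
    (hfpos : ∀ x ∈ Set.Icc j₁ j₂, 0 ≤ f x)
    (hfj₁ : f j₁ = ε) (hfj₂ : f j₂ = ε)
    (hmass : ∫ x in j₁..j₂, f x ^ 2 = α)
    (henergy : ∫ x in j₁..j₂, f' x ^ 2 ≤ α * β / L ^ 2) :
    ε ≥ (Real.sqrt α / (2 * Real.sqrt L)) * (1 - β / π ^ 2) := by
  have hL0 : 0 < L := by rw [hL]; linarith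
  have hε0 : 0 ≤ ε := hfj₁ ▸ hfpos j₁ ⟨le_refl _, hj.le⟩
  have hfc : ContinuousOn f (Set.Icc j₁ j₂) := fun x hx =>
    (hderiv x hx).continuousAt.continuousWithinAt
  have hintf : IntervalIntegrable f volume j₁ j₂ :=
    (hfc.mono (by rw [Set.uIcc_of_le hj.le] : Set.uIcc j₁ j₂ ⊆ Set.Icc j₁ j₂)).intervalIntegrable
  have hintf2 : IntervalIntegrable (fun x => f x ^ 2) volume j₁ j₂ :=
    ((hfc.pow 2).mono
      (by rw [Set.uIcc_of_le hj.le] : Set.uIcc j₁ j₂ ⊆ Set.Icc j₁ j₂)).intervalIntegrable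
  set Iv := ∫ x in j₁..j₂, f x with hIdef
  have hI0 : 0 ≤ Iv := intervalIntegral.integral_nonneg hj.le (fun x hx => hfpos x hx)
  -- expand ∫ (f - t)^2 for any constant t
  have hexp : ∀ t : ℝ, ∫ x in j₁..j₂, (f x - t)^2 = α - 2*t*Iv + t^2*(j₂-j₁) := by
    intro t
    have heq : (fun x => (f x - t)^2) = fun x => (f x^2 - (2*t)*f x) + t^2 := by
      funext x; ring
    rw [heq, intervalIntegral.integral_add (hintf2.sub (hintf.const_mul (2*t)))
        intervalIntegrable_const,
      intervalIntegral.integral_sub hintf2 (hintf.const_mul (2*t)),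
      intervalIntegral.integral_const_mul, intervalIntegral.integral_const, hmass]
    simp [hIdef]
    ring
  -- Cauchy-Schwarz
  have hCS : Iv^2 ≤ L * α := by
    have h0 : 0 ≤ ∫ x in j₁..j₂, (f x - Iv/L)^2 :=
      intervalIntegral.integral_nonneg hj.le (fun x _ => sq_nonneg _)
    rw [hexp (Iv/L)] at h0
    have hLne : L ≠ 0 := ne_of_gt hL0
    have hj₂j₁ : j₂ - j₁ = L := by rw [hL]
    rw [hj₂j₁] at h0
    have : α - 2*(Iv/L)*Iv + (Iv/L)^2*L = α - Iv^2/L := by field_simp; ring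
    rw [this, sub_nonneg, div_le_iff₀ hL0] at h0
    linarith [h0]
  have hsL : 0 < Real.sqrt L := Real.sqrt_pos.2 hL0
  have hsA : 0 < Real.sqrt α := Real.sqrt_pos.2 hα
  have hsL2 : Real.sqrt L ^ 2 = L := Real.sq_sqrt hL0.le
  have hsA2 : Real.sqrt α ^ 2 = α := Real.sq_sqrt hα.le
  have hIle : Iv ≤ Real.sqrt L * Real.sqrt α := by
    rw [← Real.sqrt_mul hL0.le]
    have := Real.sqrt_le_sqrt hCS
    rwa [Real.sqrt_sq hI0] at this
  -- Wirtinger for g = f - ε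
  have hwirt := wirtinger j₁ j₂ hj (fun x => f x - ε) f'
    (fun x hx => (hderiv x hx).sub_const ε) hf'cont (by simp [hfj₁]) (by simp [hfj₂])
  rw [hexp ε] at hwirt
  have hj₂j₁ : j₂ - j₁ = L := by rw [hL]
  rw [hj₂j₁] at hwirt
  -- key inequality
  have hπ2 : 0 < π^2 := by positivity
  have h1 : π^2 * (α - 2*ε*Iv + ε^2*L) ≤ α * β := by
    have hc : (π/L)^2 * (α - 2*ε*Iv + ε^2*L) ≤ α * β / L^2 := le_trans hwirt henergy
    rw [div_pow, div_mul_eq_mul_div, div_le_div_iff₀ (by positivity) (by positivity)] at hc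
    exact (mul_le_mul_iff_of_pos_right (by positivity : (0:ℝ) < L^2)).1 hc
  have h2 : α * (π^2 - β) ≤ 2*ε*(Real.sqrt L * Real.sqrt α)*π^2 := by
    nlinarith [h1, mul_nonneg (mul_nonneg hε0 (sub_nonneg.2 hIle)) hπ2.le,
      mul_nonneg (mul_nonneg (sq_nonneg ε) hL0.le) hπ2.le]
  have h3 : Real.sqrt α * (π^2 - β) ≤ 2*ε*(Real.sqrt L)*π^2 := by
    refine le_of_mul_le_mul_right ?_ hsA
    calc Real.sqrt α * (π^2 - β) * Real.sqrt α = α * (π^2 - β) := by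
          linear_combination (π^2 - β) * hsA2
      _ ≤ 2*ε*(Real.sqrt L * Real.sqrt α)*π^2 := h2
      _ = 2*ε*(Real.sqrt L)*π^2 * Real.sqrt α := by ring
  rw [ge_iff_le]
  calc (Real.sqrt α / (2 * Real.sqrt L)) * (1 - β / π ^ 2)
      = Real.sqrt α * (π^2 - β) / (2 * Real.sqrt L * π^2) := by
        field_simp
    _ ≤ ε := by
        rw [div_le_iff₀ (by positivity)]
        linarith [h3]
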